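/- Let ω = √(2√7−1), λ = √(2√7+1), and let A(a₄₁, a₃₄, a₄₃, a₄₄) be the 4-parameter family of matrices of Eq. (matrixA) (see context). Then the determinant of A equals −(14/3)λ a₄₁ a₄₃ [(10ω²+63)a₃₄² + ω² a₄₄²]. In particular A is invertible if and only if a₄₁ ≠ 0, a₄₃ ≠ 0, and (a₃₄, a₄₄) ≠ (0,0). -/

import Mathlib

theorem det_fin_four' {R : Type*} [CommRing R] (A : Matrix (Fin 4) (Fin 4) R) :
    A.det =
      A 0 0 * A 1 1 * A 2 2 * A 3 3 - A 0 0 * A 1 1 * A 2 3 * A 3 2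
      - A 0 0 * A 1 2 * A 2 1 * A 3 3 + A 0 0 * A 1 2 * A 2 3 * A 3 1
      + A 0 0 * A 1 3 * A 2 1 * A 3 2 - A 0 0 * A 1 3 * A 2 2 * A 3 1
      - A 0 1 * A 1 0 * A 2 2 * A 3 3 + A 0 1 * A 1 0 * A 2 3 * A 3 2
      + A 0 1 * A 1 2 * A 2 0 * A 3 3 - A 0 1 * A 1 2 * A 2 3 * A 3 0
      - A 0 1 * A 1 3 * A 2 0 * A 3 2 + A 0 1 * A 1 3 * A 2 2 * A 3 0
      + A 0 2 * A 1 0 * A 2 1 * A 3 3 - A 0 2 * A 1 0 * A 2 3 * A 3 1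
      - A 0 2 * A 1 1 * A 2 0 * A 3 3 + A 0 2 * A 1 1 * A 2 3 * A 3 0
      + A 0 2 * A 1 3 * A 2 0 * A 3 1 - A 0 2 * A 1 3 * A 2 1 * A 3 0
      - A 0 3 * A 1 0 * A 2 1 * A 3 2 + A 0 3 * A 1 0 * A 2 2 * A 3 1
      + A 0 3 * A 1 1 * A 2 0 * A 3 2 - A 0 3 * A 1 1 * A 2 2 * A 3 0
      - A 0 3 * A 1 2 * A 2 0 * A 3 1 + A 0 3 * A 1 2 * A 2 1 * A 3 0 := by
  rw [Matrix.det_succ_row_zero]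
  simp [Fin.sum_univ_succ, Matrix.det_fin_three, Matrix.submatrix_apply, Fin.succAbove,
    Fin.ext_iff, show (Fin.succ 2 : Fin 4) = 3 from rfl,
    show (Fin.castSucc 2 : Fin 4) = 2 from rfl]
  ring

/-- Determinant of the 4-parameter family of decoupling matrices for the Hill problem,
and the characterization of its invertibility. -/
theorem hill_matrixA_det (a41 a34 a43 a44 : ℝ) :
    let l : ℝ := Real.sqrt (2 * Real.sqrt 7 + 1)
    let w : ℝ := Real.sqrt (2 * Real.sqrt 7 - 1)
    let A : Matrix (Fin 4) (Fin 4) ℝ :=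
      !![-(w^2+7)*a41/4,     -(w^2+3)*a34/4,  -(w^2+7)*a43/4,     (w^2-5)*a44/4;
         l*(w^2+3)*a41/12,   -(w^2-9)*a44/4,  -(l*(w^2+3))*a43/12, -(w^2+7)*a34/4;
         -(l*(w^2+6))*a41/3, (2*w^2-9)*a44,   l*(w^2+6)*a43/3,    a34;
         a41,                (w^2+6)*a34,     a43,                a44]
    A.det = -(14/3) * l * a41 * a43 * ((10*w^2+63)*a34^2 + w^2*a44^2) ∧
    (IsUnit A.det ↔ (a41 ≠ 0 ∧ a43 ≠ 0 ∧ ¬(a34 = 0 ∧ a44 = 0))) := by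
  intro l w A
  set s : ℝ := Real.sqrt 7 with hs
  have hsnn : (0:ℝ) ≤ s := Real.sqrt_nonneg 7
  have hs2 : s^2 = 7 := Real.sq_sqrt (by norm_num)
  have hslb : (2:ℝ) ≤ s := by nlinarith
  have hw2 : w^2 = 2*s - 1 := Real.sq_sqrt (by nlinarith)
  have hlpos : 0 < l := Real.sqrt_pos.mpr (by nlinarith)
  have hw2pos : 0 < w^2 := by rw [hw2]; nlinarith
  have hdet : A.det = -(14/3) * l * a41 * a43 * ((10*w^2+63)*a34^2 + w^2*a44^2) := by
    rw [show A.det = _ from det_fin_four' A]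
    simp only [A, Matrix.cons_val', Matrix.cons_val_zero, Matrix.cons_val_one, Matrix.head_cons,
      Matrix.empty_val', Matrix.cons_val_fin_one, Matrix.head_val', Matrix.cons_val_two,
      Matrix.cons_val_three, Matrix.tail_cons, Matrix.of_apply, Matrix.cons_val_succ,
      Matrix.head_fin_const]
    linear_combination
      ((29/12)*l*a41*a43*a44^2 + (383/24)*l*a41*a34^2*a43 + (1/6)*l*s*a41*a43*a44^2
        - (59/4)*l*s*a41*a34^2*a43 - (1/3)*l*s^2*a41*a43*a44^2 - (7/2)*l*s^2*a41*a34^2*a43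
        - (1/3)*l*s^3*a41*a34^2*a43 - (199/24)*l*w^2*a41*a34^2*a43
        - (1/6)*l*w^2*s*a41*a43*a44^2 - (11/6)*l*w^2*s*a41*a34^2*a43
        - (1/6)*l*w^2*s^2*a41*a34^2*a43 - (1/12)*l*w^4*a41*a43*a44^2
        - (23/24)*l*w^4*a41*a34^2*a43 - (1/12)*l*w^4*s*a41*a34^2*a43
        - (1/24)*l*w^6*a41*a34^2*a43) * hw2
      + ((2/3)*l*a41*a43*a44^2 - (92/3)*l*a41*a34^2*a43 - (2/3)*l*s*a41*a43*a44^2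
        - (20/3)*l*s*a41*a34^2*a43 - (2/3)*l*s^2*a41*a34^2*a43) * hs2
  refine ⟨hdet, ?_⟩
  rw [hdet, isUnit_iff_ne_zero]
  constructor
  · intro h
    refine ⟨?_, ?_, ?_⟩
    · intro h41; exact h (by rw [h41]; ring)
    · intro h43; exact h (by rw [h43]; ring)
    · rintro ⟨h34, h44⟩; exact h (by rw [h34, h44]; ring)
  · rintro ⟨h41, h43, h⟩
    have hQ : (10*w^2+63)*a34^2 + w^2*a44^2 ≠ 0 := by
      intro hq0
      exact h (by constructor <;> nlinarith [sq_nonneg a34, sq_nonneg a44])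
    exact mul_ne_zero (mul_ne_zero (mul_ne_zero (mul_ne_zero (by norm_num) hlpos.ne')
      h41) h43) hQ
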